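/- For n ≥ 2, the map φ ↦ (φ(e₁), φ(e₂)) is a bijection from the set 𝓜(A_2; A_n) of algebra monomorphisms A_2 = ℍ → A_n onto {(a,b) ∈ V_{2^n−1,2} : (a,a,b) = 0 and (a,b,b) = 0}. In particular, since every pair of elements of A_2 and of A_3 alternates strongly, Aut(A_2) = 𝓜(A_2;A_2) corresponds to V_{3,2} ≅ SO(3) and 𝓜(A_2; A_3) corresponds to V_{7,2}. -/

import Mathlib

noncomputable section

/-- The Cayley–Dickson algebra `A n` of dimension `2^n` over `ℝ`:
`A 0 = ℝ` and `A (n+1) = A n × A n`. -/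
def CD : ℕ → Type
  | 0 => ℝ
  | n + 1 => CD n × CD n

namespace CD

instance instAddCommGroup : (n : ℕ) → AddCommGroup (CD n)
  | 0 => inferInstanceAs (AddCommGroup ℝ)
  | n + 1 =>
    letI := instAddCommGroup n
    inferInstanceAs (AddCommGroup (CD n × CD n))

instance instModule : (n : ℕ) → Module ℝ (CD n)
  | 0 => inferInstanceAs (Module ℝ ℝ)
  | n + 1 =>
    letI := instAddCommGroup n
    letI := instModule n
    inferInstanceAs (Module ℝ (CD n × CD n))

/-- Conjugation: `x̄ = x` on `ℝ` and `(x₁,x₂)‾ = (x̄₁, -x₂)`. -/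
protected def conj : {n : ℕ} → CD n → CD n
  | 0, x => x
  | _ + 1, x => (CD.conj x.1, -x.2)

/-- Cayley–Dickson multiplication: `(a,b)(x,y) = (ax - ȳb, ya + bx̄)`. -/
protected def mul : {n : ℕ} → CD n → CD n → CD n
  | 0, x, y => (show ℝ from x) * (show ℝ from y)
  | _ + 1, x, y =>
    (CD.mul x.1 y.1 - CD.mul (CD.conj y.2) x.2,
     CD.mul y.2 x.1 + CD.mul x.2 (CD.conj y.1))

instance instMul (n : ℕ) : Mul (CD n) := ⟨CD.mul⟩

/-- The multiplicative unit `e₀` of `A n`. -/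
def e0 : (n : ℕ) → CD n
  | 0 => (1 : ℝ)
  | n + 1 => (e0 n, 0)

/-- The element `ẽ₀ = (0, e₀)` of `A n` (junk value `0` for `n = 0`). -/
def te0 : (n : ℕ) → CD n
  | 0 => 0
  | n + 1 => (0, e0 n)

/-- The "complexification" `α̃ = (-b, a)` of `α = (a,b)` (junk value `0` for `n = 0`);
note `α̃ = α·ẽ₀`. -/
def tilde : {n : ℕ} → CD n → CD n
  | 0, _ => 0
  | _ + 1, x => (-x.2, x.1)

/-- The standard inner product on `A n ≅ ℝ^{2^n}`. -/
protected def inner : {n : ℕ} → CD n → CD n → ℝ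
  | 0, x, y => (show ℝ from x) * (show ℝ from y)
  | _ + 1, x, y => CD.inner x.1 y.1 + CD.inner x.2 y.2

/-- The euclidean norm on `A n`. -/
protected def norm {n : ℕ} (x : CD n) : ℝ := Real.sqrt (CD.inner x x)

/-- `x` is pure if its trace `t(x) = x + x̄` vanishes. -/
def IsPure {n : ℕ} (x : CD n) : Prop := x + CD.conj x = 0

/-- `x = (a,b)` is doubly pure if both `a` and `b` are pure
(equivalently, both `x` and `x̃` are pure). -/
def IsDoublyPure : {n : ℕ} → CD n → Prop
  | 0, x => x = 0
  | _ + 1, x => IsPure x.1 ∧ IsPure x.2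

/-- The associator `(x,y,z) = (xy)z - x(yz)`. -/
def assoc {n : ℕ} (x y z : CD n) : CD n := (x * y) * z - x * (y * z)

/-- The subspace `ℍ_a`: the real span of `{e₀, ã, a, ẽ₀}`. -/
def Ha {n : ℕ} (a : CD n) : Submodule ℝ (CD n) :=
  Submodule.span ℝ {e0 n, tilde a, a, te0 n}

/-- The orthogonal complement `ℍ_a^⊥` of `ℍ_a` in `A n`. -/
def HaPerp {n : ℕ} (a : CD n) : Set (CD n) :=
  {x | ∀ y ∈ Ha a, CD.inner x y = 0}

/-- The element `ε = (ẽ₀, 0)` of `A (n+1)`. -/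
def eps (n : ℕ) : CD (n + 1) := (te0 n, 0)

/-- `α̂ = (b,a)` for `α = (a,b) ∈ A (n+1)`. -/
def hat {n : ℕ} (x : CD (n + 1)) : CD (n + 1) := (x.2, x.1)

/-- The element `(a, b)` of `A (n+1) = A n × A n`. -/
def pair {n : ℕ} (a b : CD n) : CD (n + 1) := (a, b)

end CD

/-- An algebra monomorphism `A m → A n`: an injective `ℝ`-linear map preserving
the unit and multiplication. -/
def IsMono {m n : ℕ} (φ : CD m →ₗ[ℝ] CD n) : Prop :=
  Function.Injective φ ∧ φ (CD.e0 m) = CD.e0 n ∧ ∀ x y, φ (x * y) = φ x * φ y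

/-- The canonical basis vector `e₁` of `A 2 = ℍ`. -/
def q1 : CD 2 := (CD.te0 1, 0)
/-- The canonical basis vector `e₂` of `A 2 = ℍ`. -/
def q2 : CD 2 := (0, CD.e0 1)
/-- The canonical basis vector `e₃` of `A 2 = ℍ`. -/
def q3 : CD 2 := (0, CD.te0 1)

/-- The real Stiefel manifold `V_{2^n-1,2}`: pairs of orthonormal pure elements of `A n`. -/
def V (n : ℕ) : Set (CD n × CD n) :=
  {p | CD.IsPure p.1 ∧ CD.IsPure p.2 ∧
    CD.norm p.1 = 1 ∧ CD.norm p.2 = 1 ∧ CD.inner p.1 p.2 = 0}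

namespace CD
lemma add_succ {n : ℕ} :
    (∀ x y : CD (n+1), x + y = (x.1 + y.1, x.2 + y.2)) ∧
    (∀ (a b : CD n) (y : CD (n+1)), @HAdd.hAdd (CD (n+1)) (CD (n+1)) (CD (n+1)) _ (a, b) y = (a + y.1, b + y.2)) ∧
    (∀ (x : CD (n+1)) (c d : CD n), @HAdd.hAdd (CD (n+1)) (CD (n+1)) (CD (n+1)) _ x (c, d) = (x.1 + c, x.2 + d)) ∧
    (∀ a b c d : CD n, @HAdd.hAdd (CD (n+1)) (CD (n+1)) (CD (n+1)) _ (a, b) (c, d) = (a + c, b + d)) :=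
  ⟨fun _ _ => rfl, fun _ _ _ => rfl, fun _ _ _ => rfl, fun _ _ _ _ => rfl⟩
lemma neg_succ {n : ℕ} :
    (∀ x : CD (n+1), -x = (-x.1, -x.2)) ∧
    (∀ a b : CD n, @Neg.neg (CD (n+1)) _ (a, b) = (-a, -b)) :=
  ⟨fun _ => rfl, fun _ _ => rfl⟩
lemma sub_succ {n : ℕ} :
    (∀ x y : CD (n+1), x - y = (x.1 - y.1, x.2 - y.2)) ∧
    (∀ (a b : CD n) (y : CD (n+1)), @HSub.hSub (CD (n+1)) (CD (n+1)) (CD (n+1)) _ (a, b) y = (a - y.1, b - y.2)) ∧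
    (∀ (x : CD (n+1)) (c d : CD n), @HSub.hSub (CD (n+1)) (CD (n+1)) (CD (n+1)) _ x (c, d) = (x.1 - c, x.2 - d)) ∧
    (∀ a b c d : CD n, @HSub.hSub (CD (n+1)) (CD (n+1)) (CD (n+1)) _ (a, b) (c, d) = (a - c, b - d)) :=
  ⟨fun _ _ => rfl, fun _ _ _ => rfl, fun _ _ _ => rfl, fun _ _ _ _ => rfl⟩
lemma smul_succ {n : ℕ} :
    (∀ (r : ℝ) (x : CD (n+1)), r • x = (r • x.1, r • x.2)) ∧
    (∀ (r : ℝ) (a b : CD n), @HSMul.hSMul ℝ (CD (n+1)) (CD (n+1)) _ r (a, b) = (r • a, r • b)) :=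
  ⟨fun _ _ => rfl, fun _ _ _ => rfl⟩
lemma zero_succ {n : ℕ} : (0 : CD (n+1)) = ((0 : CD n), (0 : CD n)) := rfl
lemma mul_succ {n : ℕ} :
    (∀ x y : CD (n+1), x * y = (x.1 * y.1 - CD.conj y.2 * x.2, y.2 * x.1 + x.2 * CD.conj y.1)) ∧
    (∀ (a b : CD n) (y : CD (n+1)),
      @HMul.hMul (CD (n+1)) (CD (n+1)) (CD (n+1)) _ (a, b) y = (a * y.1 - CD.conj y.2 * b, y.2 * a + b * CD.conj y.1)) ∧
    (∀ (x : CD (n+1)) (c d : CD n),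
      @HMul.hMul (CD (n+1)) (CD (n+1)) (CD (n+1)) _ x (c, d) = (x.1 * c - CD.conj d * x.2, d * x.1 + x.2 * CD.conj c)) ∧
    (∀ a b c d : CD n, @HMul.hMul (CD (n+1)) (CD (n+1)) (CD (n+1)) _ (a, b) (c, d) = (a * c - CD.conj d * b, d * a + b * CD.conj c)) :=
  ⟨fun _ _ => rfl, fun _ _ _ => rfl, fun _ _ _ => rfl, fun _ _ _ _ => rfl⟩
lemma mul_zero_def (x y : CD 0) : x * y = (show ℝ from x) * (show ℝ from y) := rfl
lemma conj_succ {n : ℕ} :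
    (∀ x : CD (n+1), CD.conj x = (CD.conj x.1, -x.2)) ∧
    (∀ a b : CD n, @CD.conj (n+1) (a, b) = (CD.conj a, -b)) :=
  ⟨fun _ => rfl, fun _ _ => rfl⟩
lemma conj_zero_def (x : CD 0) : CD.conj x = x := rfl
lemma inner_succ {n : ℕ} :
    (∀ x y : CD (n+1), CD.inner x y = CD.inner x.1 y.1 + CD.inner x.2 y.2) ∧
    (∀ (a b : CD n) (y : CD (n+1)), @CD.inner (n+1) (a, b) y = CD.inner a y.1 + CD.inner b y.2) ∧
    (∀ (x : CD (n+1)) (c d : CD n), @CD.inner (n+1) x (c, d) = CD.inner x.1 c + CD.inner x.2 d) ∧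
    (∀ a b c d : CD n, @CD.inner (n+1) (a, b) (c, d) = CD.inner a c + CD.inner b d) :=
  ⟨fun _ _ => rfl, fun _ _ _ => rfl, fun _ _ _ => rfl, fun _ _ _ _ => rfl⟩
lemma inner_zero_def (x y : CD 0) : CD.inner x y = (show ℝ from x) * (show ℝ from y) := rfl
lemma e0_succ {n : ℕ} : e0 (n+1) = (e0 n, (0 : CD n)) := rfl

lemma mk_inj {n : ℕ} {a b c d : CD n} :
    @Eq (CD (n+1)) (Prod.mk a b) (Prod.mk c d) ↔ a = c ∧ b = d := Prod.ext_iff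

lemma ext_succ {n : ℕ} {x y : CD (n+1)} (h1 : x.1 = y.1) (h2 : x.2 = y.2) : x = y :=
  Prod.ext h1 h2

lemma conj_conj : ∀ {n : ℕ} (x : CD n), CD.conj (CD.conj x) = x
  | 0, _ => rfl
  | n + 1, x => by
    simp only [conj_succ, neg_neg, mk_inj]
    refine Prod.ext (conj_conj x.1) rfl

lemma conj_add : ∀ {n : ℕ} (x y : CD n), CD.conj (x + y) = CD.conj x + CD.conj y
  | 0, _, _ => rfl
  | n + 1, x, y => by
    simp only [add_succ, conj_succ, mk_inj]
    exact ⟨conj_add x.1 y.1, by abel⟩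

lemma conj_neg : ∀ {n : ℕ} (x : CD n), CD.conj (-x) = -CD.conj x
  | 0, _ => rfl
  | n + 1, x => by
    simp only [neg_succ, conj_succ, mk_inj]
    exact ⟨conj_neg x.1, trivial⟩

lemma conj_zero : ∀ {n : ℕ}, CD.conj (0 : CD n) = 0
  | 0 => rfl
  | n + 1 => by
    simp only [zero_succ, conj_succ, neg_zero, mk_inj]
    exact ⟨conj_zero, trivial⟩

lemma conj_smul : ∀ {n : ℕ} (r : ℝ) (x : CD n), CD.conj (r • x) = r • CD.conj x
  | 0, _, _ => rfl
  | n + 1, r, x => by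
    simp only [smul_succ, conj_succ, Prod.ext_iff, smul_neg]
    exact Prod.ext (conj_smul r x.1) rfl

lemma conj_sub {n : ℕ} (x y : CD n) : CD.conj (x - y) = CD.conj x - CD.conj y := by
  rw [sub_eq_add_neg, conj_add, conj_neg, sub_eq_add_neg]

lemma conj_e0 : ∀ {n : ℕ}, CD.conj (e0 n) = e0 n
  | 0 => rfl
  | n + 1 => by
    simp only [e0_succ, conj_succ, neg_zero, mk_inj]
    exact ⟨conj_e0, trivial⟩

lemma mul_bilin : ∀ {n : ℕ}, (∀ x y z : CD n, (x + y) * z = x * z + y * z) ∧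
    (∀ x y z : CD n, x * (y + z) = x * y + x * z)
  | 0 => ⟨fun x y z => add_mul (show ℝ from x) y z, fun x y z => mul_add (show ℝ from x) y z⟩
  | n + 1 => by
    obtain ⟨ha, hm⟩ := @mul_bilin n
    refine ⟨fun x y z => ?_, fun x y z => ?_⟩
    · simp only [add_succ, mul_succ, mk_inj]
      rw [ha, hm, ha, hm]
      exact ⟨by abel, by abel⟩
    · simp only [add_succ, mul_succ, conj_succ, conj_add, neg_succ, mk_inj]
      rw [hm, hm, ha, ha]
      exact ⟨by abel, by abel⟩

lemma add_mul' {n : ℕ} (x y z : CD n) : (x + y) * z = x * z + y * z := mul_bilin.1 x y z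
lemma mul_add' {n : ℕ} (x y z : CD n) : x * (y + z) = x * y + x * z := mul_bilin.2 x y z

lemma mul_smul_pair : ∀ {n : ℕ}, (∀ (r : ℝ) (x y : CD n), (r • x) * y = r • (x * y)) ∧
    (∀ (r : ℝ) (x y : CD n), x * (r • y) = r • (x * y))
  | 0 => ⟨fun r x y => smul_mul_assoc r (show ℝ from x) y,
          fun r x y => mul_smul_comm r (show ℝ from x) y⟩
  | n + 1 => by
    obtain ⟨hl, hr⟩ := @mul_smul_pair n
    refine ⟨fun r x y => ?_, fun r x y => ?_⟩
    · simp only [smul_succ, mul_succ, mk_inj]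
      rw [hl, hr, hr, hl, smul_sub, smul_add]
      exact ⟨rfl, rfl⟩
    · simp only [smul_succ, mul_succ, conj_succ, conj_smul, neg_succ, smul_neg, mk_inj]
      rw [hr, hl, hl, hr, smul_sub, smul_add]
      exact ⟨rfl, rfl⟩

lemma smul_mul' {n : ℕ} (r : ℝ) (x y : CD n) : (r • x) * y = r • (x * y) := mul_smul_pair.1 r x y
lemma mul_smul' {n : ℕ} (r : ℝ) (x y : CD n) : x * (r • y) = r • (x * y) := mul_smul_pair.2 r x y

lemma zero_mul' {n : ℕ} (x : CD n) : (0 : CD n) * x = 0 := by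
  have := smul_mul' (0:ℝ) (0 : CD n) x; simpa using this
lemma mul_zero' {n : ℕ} (x : CD n) : x * (0 : CD n) = 0 := by
  have := mul_smul' (0:ℝ) x (0 : CD n); simpa using this
lemma neg_mul' {n : ℕ} (x y : CD n) : (-x) * y = -(x * y) := by
  have := smul_mul' (-1:ℝ) x y; simpa using this
lemma mul_neg' {n : ℕ} (x y : CD n) : x * (-y) = -(x * y) := by
  have := mul_smul' (-1:ℝ) x y; simpa using this
lemma sub_mul' {n : ℕ} (x y z : CD n) : (x - y) * z = x * z - y * z := by
  rw [sub_eq_add_neg, add_mul', neg_mul', sub_eq_add_neg]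
lemma mul_sub' {n : ℕ} (x y z : CD n) : x * (y - z) = x * y - x * z := by
  rw [sub_eq_add_neg, mul_add', mul_neg', sub_eq_add_neg]

lemma mul_e0 : ∀ {n : ℕ} (x : CD n), x * e0 n = x
  | 0, x => mul_one (show ℝ from x)
  | n + 1, x => by
    simp only [e0_succ, mul_succ, conj_e0, conj_zero]
    rw [mul_e0 x.1, zero_mul' x.2, mul_e0 x.2, zero_mul' x.1, sub_zero, zero_add]
    exact Prod.ext rfl rfl

lemma one_mul' : ∀ {n : ℕ} (x : CD n), e0 n * x = x
  | 0, x => one_mul (show ℝ from x)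
  | n + 1, x => by
    simp only [e0_succ, mul_succ, conj_e0]
    rw [one_mul' x.1, mul_zero' (CD.conj x.2), mul_e0 x.2, zero_mul' (CD.conj x.1),
      sub_zero, add_zero]
    exact Prod.ext rfl rfl

end CD
namespace CD

lemma conj_mul : ∀ {n : ℕ} (x y : CD n), CD.conj (x * y) = CD.conj y * CD.conj x
  | 0, x, y => mul_comm (show ℝ from x) (show ℝ from y)
  | n + 1, x, y => by
    simp only [mul_succ, conj_succ, mk_inj, neg_neg]
    constructor
    · rw [conj_sub, conj_mul x.1 y.1, conj_mul (CD.conj y.2) x.2, conj_conj, conj_neg,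
        neg_mul', mul_neg', neg_neg]
    · simp only [conj_conj, neg_mul', neg_add]
      abel

lemma inner_comm : ∀ {n : ℕ} (x y : CD n), CD.inner x y = CD.inner y x
  | 0, x, y => mul_comm (show ℝ from x) (show ℝ from y)
  | n + 1, x, y => by
    simp only [inner_succ]
    rw [inner_comm x.1 y.1, inner_comm x.2 y.2]

lemma inner_add_left : ∀ {n : ℕ} (x y z : CD n), CD.inner (x + y) z = CD.inner x z + CD.inner y z
  | 0, x, y, z => add_mul (show ℝ from x) y z
  | n + 1, x, y, z => by
    simp only [inner_succ, add_succ]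
    rw [inner_add_left x.1 y.1, inner_add_left x.2 y.2]; ring

lemma inner_add_right {n : ℕ} (x y z : CD n) :
    CD.inner x (y + z) = CD.inner x y + CD.inner x z := by
  rw [inner_comm, inner_add_left, inner_comm y x, inner_comm z x]

lemma inner_smul_left : ∀ {n : ℕ} (r : ℝ) (x y : CD n), CD.inner (r • x) y = r * CD.inner x y
  | 0, r, x, y => by
    show (r • (show ℝ from x)) * (show ℝ from y) = r * ((show ℝ from x) * (show ℝ from y))
    rw [smul_eq_mul]; ring
  | n + 1, r, x, y => by
    simp only [inner_succ, smul_succ]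
    rw [inner_smul_left r x.1, inner_smul_left r x.2]; ring

lemma inner_smul_right {n : ℕ} (r : ℝ) (x y : CD n) : CD.inner x (r • y) = r * CD.inner x y := by
  rw [inner_comm, inner_smul_left, inner_comm y x]

lemma inner_neg_left {n : ℕ} (x y : CD n) : CD.inner (-x) y = -CD.inner x y := by
  have := inner_smul_left (-1 : ℝ) x y; simpa using this

lemma inner_neg_right {n : ℕ} (x y : CD n) : CD.inner x (-y) = -CD.inner x y := by
  have := inner_smul_right (-1 : ℝ) x y; simpa using this

lemma inner_sub_left {n : ℕ} (x y z : CD n) :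
    CD.inner (x - y) z = CD.inner x z - CD.inner y z := by
  rw [sub_eq_add_neg, inner_add_left, inner_neg_left, sub_eq_add_neg]

lemma inner_sub_right {n : ℕ} (x y z : CD n) :
    CD.inner x (y - z) = CD.inner x y - CD.inner x z := by
  rw [sub_eq_add_neg, inner_add_right, inner_neg_right, sub_eq_add_neg]

lemma inner_zero_left {n : ℕ} (x : CD n) : CD.inner 0 x = 0 := by
  have := inner_smul_left (0 : ℝ) 0 x; simpa using this

lemma inner_zero_right {n : ℕ} (x : CD n) : CD.inner x 0 = 0 := by
  have := inner_smul_right (0 : ℝ) x 0; simpa using this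

lemma inner_e0_e0 : ∀ {n : ℕ}, CD.inner (e0 n) (e0 n) = 1
  | 0 => mul_one 1
  | n + 1 => by
    simp only [e0_succ, inner_succ]
    rw [inner_e0_e0, inner_zero_left]; ring

lemma inner_conj_conj : ∀ {n : ℕ} (x y : CD n), CD.inner (CD.conj x) (CD.conj y) = CD.inner x y
  | 0, x, y => rfl
  | n + 1, x, y => by
    simp only [conj_succ, inner_succ]
    rw [inner_conj_conj x.1 y.1, inner_neg_left, inner_neg_right, neg_neg]

/-- trace: `x + x̄ = 2⟨x,e0⟩ • e0`. -/
lemma trace_eq : ∀ {n : ℕ} (x : CD n), x + CD.conj x = (2 * CD.inner x (e0 n)) • e0 n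
  | 0, x => by
    show (show ℝ from x) + (show ℝ from x) =
      (2 * ((show ℝ from x) * (1:ℝ))) • (1:ℝ)
    rw [smul_eq_mul]; ring
  | n + 1, x => by
    simp only [conj_succ, e0_succ, add_succ, smul_succ, inner_succ]
    refine Prod.ext ?_ ?_
    · show x.1 + CD.conj x.1 = (2 * (CD.inner x.1 (e0 n) + CD.inner x.2 0)) • e0 n
      rw [inner_zero_right, trace_eq x.1]; ring_nf
    · show x.2 + -x.2 = (2 * (CD.inner x.1 (e0 n) + CD.inner x.2 0)) • (0 : CD n)
      rw [smul_zero, add_neg_cancel]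

/-- `x̄ x = ⟨x,x⟩ • e0`. -/
lemma conj_mul_self : ∀ {n : ℕ} (x : CD n), CD.conj x * x = CD.inner x x • e0 n
  | 0, x => by
    show (show ℝ from x) * (show ℝ from x) = ((show ℝ from x) * (show ℝ from x)) • (1:ℝ)
    rw [smul_eq_mul]; ring
  | n + 1, x => by
    simp only [conj_succ, mul_succ, e0_succ, inner_succ, smul_succ]
    refine Prod.ext ?_ ?_
    · show CD.conj x.1 * x.1 - CD.conj x.2 * -x.2
          = (CD.inner x.1 x.1 + CD.inner x.2 x.2) • e0 n
      rw [mul_neg', sub_neg_eq_add, conj_mul_self x.1, conj_mul_self x.2, add_smul]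
    · show x.2 * CD.conj x.1 + -x.2 * CD.conj x.1
          = (CD.inner x.1 x.1 + CD.inner x.2 x.2) • (0 : CD n)
      rw [neg_mul', smul_zero, add_neg_cancel]

/-- `x x̄ = ⟨x,x⟩ • e0`. -/
lemma mul_conj_self : ∀ {n : ℕ} (x : CD n), x * CD.conj x = CD.inner x x • e0 n
  | 0, x => by
    show (show ℝ from x) * (show ℝ from x) = ((show ℝ from x) * (show ℝ from x)) • (1:ℝ)
    rw [smul_eq_mul]; ring
  | n + 1, x => by
    simp only [conj_succ, mul_succ, e0_succ, inner_succ, smul_succ]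
    refine Prod.ext ?_ ?_
    · show x.1 * CD.conj x.1 - CD.conj (-x.2) * x.2
          = (CD.inner x.1 x.1 + CD.inner x.2 x.2) • e0 n
      rw [conj_neg, neg_mul', sub_neg_eq_add, mul_conj_self x.1, conj_mul_self x.2,
        add_smul]
    · show -x.2 * x.1 + x.2 * CD.conj (CD.conj x.1)
          = (CD.inner x.1 x.1 + CD.inner x.2 x.2) • (0 : CD n)
      rw [conj_conj, neg_mul', smul_zero, neg_add_cancel]

/-- the adjoint identities. -/
lemma inner_mul_pair : ∀ {n : ℕ},
    (∀ x y z : CD n, CD.inner (x * y) z = CD.inner y (CD.conj x * z)) ∧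
    (∀ x y z : CD n, CD.inner (x * y) z = CD.inner x (z * CD.conj y))
  | 0 => by
    refine ⟨fun x y z => ?_, fun x y z => ?_⟩
    · show ((show ℝ from x) * (show ℝ from y)) * (show ℝ from z)
          = (show ℝ from y) * ((show ℝ from x) * (show ℝ from z))
      ring
    · show ((show ℝ from x) * (show ℝ from y)) * (show ℝ from z)
          = (show ℝ from x) * ((show ℝ from z) * (show ℝ from y))
      ring
  | n + 1 => by
    obtain ⟨ih1, ih2⟩ := @inner_mul_pair n
    refine ⟨fun x y z => ?_, fun x y z => ?_⟩
    · simp only [mul_succ, conj_succ, inner_succ]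
      have h1 : CD.inner (x.1 * y.1) z.1 = CD.inner y.1 (CD.conj x.1 * z.1) := ih1 _ _ _
      have h2 : CD.inner (CD.conj y.2 * x.2) z.1 = CD.inner x.2 (y.2 * z.1) := by
        rw [ih1 (CD.conj y.2) x.2 z.1, conj_conj]
      have h2' : CD.inner y.2 (x.2 * CD.conj z.1) = CD.inner x.2 (y.2 * z.1) := by
        rw [inner_comm, ih2 x.2 (CD.conj z.1) y.2, conj_conj]
      have h3 : CD.inner (y.2 * x.1) z.2 = CD.inner y.2 (z.2 * CD.conj x.1) := ih2 _ _ _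
      have h4 : CD.inner (x.2 * CD.conj y.1) z.2 = CD.inner x.2 (z.2 * y.1) := by
        rw [ih2 x.2 (CD.conj y.1) z.2, conj_conj]
      have h4' : CD.inner y.1 (CD.conj z.2 * x.2) = CD.inner x.2 (z.2 * y.1) := by
        rw [inner_comm, ih1 (CD.conj z.2) x.2 y.1, conj_conj]
      simp only [inner_sub_left, inner_add_left, inner_sub_right, inner_add_right,
        inner_neg_left, inner_neg_right, neg_mul', mul_neg']
      linarith [h1, h2, h2', h3, h4, h4']
    · simp only [mul_succ, conj_succ, inner_succ]
      have g1 : CD.inner (x.1 * y.1) z.1 = CD.inner x.1 (z.1 * CD.conj y.1) := ih2 _ _ _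
      have g2 : CD.inner (CD.conj y.2 * x.2) z.1 = CD.inner x.2 (y.2 * z.1) := by
        rw [ih1 (CD.conj y.2) x.2 z.1, conj_conj]
      have g2' : CD.inner (y.2 * x.1) z.2 = CD.inner x.1 (CD.conj y.2 * z.2) := ih1 _ _ _
      have g4 : CD.inner (x.2 * CD.conj y.1) z.2 = CD.inner x.2 (z.2 * y.1) := by
        rw [ih2 x.2 (CD.conj y.1) z.2, conj_conj]
      have g5 : CD.inner x.2 (z.2 * CD.conj (CD.conj y.1)) = CD.inner x.2 (z.2 * y.1) := by
        rw [conj_conj]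
      simp only [inner_sub_left, inner_add_left, inner_sub_right, inner_add_right,
        inner_neg_left, inner_neg_right, neg_mul', mul_neg', conj_neg, conj_conj]
      linarith [g1, g2, g2', g4, g5]

lemma inner_mul_left' {n : ℕ} (x y z : CD n) :
    CD.inner (x * y) z = CD.inner y (CD.conj x * z) := inner_mul_pair.1 x y z
lemma inner_mul_right' {n : ℕ} (x y z : CD n) :
    CD.inner (x * y) z = CD.inner x (z * CD.conj y) := inner_mul_pair.2 x y z

end CD
namespace CD

lemma inner_self_nonneg : ∀ {n : ℕ} (x : CD n), 0 ≤ CD.inner x x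
  | 0, x => mul_self_nonneg (show ℝ from x)
  | n + 1, x => by
    simp only [inner_succ]
    exact add_nonneg (inner_self_nonneg x.1) (inner_self_nonneg x.2)

lemma smul_e0_eq_zero {n : ℕ} {r : ℝ} (h : r • e0 n = 0) : r = 0 := by
  have := congrArg (fun z => CD.inner z (e0 n)) h
  simpa [inner_smul_left, inner_e0_e0, inner_zero_left] using this

lemma pure_iff {n : ℕ} {x : CD n} : IsPure x ↔ CD.inner x (e0 n) = 0 := by
  constructor
  · intro h
    have h2 : (2 * CD.inner x (e0 n)) • e0 n = 0 := by rw [← trace_eq]; exact h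
    have := smul_e0_eq_zero h2
    linarith
  · intro h
    show x + CD.conj x = 0
    rw [trace_eq, h]; simp

lemma pure_conj {n : ℕ} {x : CD n} (h : IsPure x) : CD.conj x = -x := by
  have : x + CD.conj x = 0 := h
  linear_combination (norm := abel) this

lemma sq_eq_neg_e0 {n : ℕ} {a : CD n} (ha : IsPure a) (na : CD.inner a a = 1) :
    a * a = -(e0 n) := by
  have := mul_conj_self a
  rw [pure_conj ha, mul_neg', na, one_smul] at this
  linear_combination (norm := abel) -this

lemma polarization {n : ℕ} (a b : CD n) :
    a * CD.conj b + b * CD.conj a = (2 * CD.inner a b) • e0 n := by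
  have h := mul_conj_self (a + b)
  rw [conj_add, mul_add', add_mul', add_mul', mul_conj_self a, mul_conj_self b,
    inner_add_left, inner_add_right, inner_add_right, inner_comm b a] at h
  have : a * CD.conj b + b * CD.conj a
      = (CD.inner a a + (CD.inner a b + (CD.inner a b + CD.inner b b))) • e0 n
        - CD.inner a a • e0 n - CD.inner b b • e0 n := by
    linear_combination (norm := abel) h
  rw [this]
  rw [show (CD.inner a a + (CD.inner a b + (CD.inner a b + CD.inner b b)))
      = 2 * CD.inner a b + (CD.inner a a + CD.inner b b) by ring]
  rw [add_smul, add_smul]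
  abel

lemma anticomm {n : ℕ} {a b : CD n} (ha : IsPure a) (hb : IsPure b) :
    a * b + b * a = -((2 * CD.inner a b) • e0 n) := by
  have := polarization a b
  rw [pure_conj ha, pure_conj hb, mul_neg', mul_neg'] at this
  linear_combination (norm := abel) -this

lemma anticomm' {n : ℕ} {a b : CD n} (ha : IsPure a) (hb : IsPure b)
    (hab : CD.inner a b = 0) : b * a = -(a * b) := by
  have := anticomm ha hb
  rw [hab] at this
  simp only [mul_zero, zero_smul, neg_zero] at this
  linear_combination (norm := abel) this

/-- `a² = -e₀` forces `a` pure of norm one. -/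
lemma of_sq_eq_neg_e0 {n : ℕ} {a : CD n} (h : a * a = -(e0 n)) :
    IsPure a ∧ CD.inner a a = 1 := by
  set t := CD.inner a (e0 n) with ht
  set p := a - t • e0 n with hp
  have hpp : CD.inner p (e0 n) = 0 := by
    rw [hp, inner_sub_left, inner_smul_left, inner_e0_e0]; ring
  have hpure : IsPure p := pure_iff.mpr hpp
  have ha : a = t • e0 n + p := by rw [hp]; abel
  have hp2 : p * p = -(CD.inner p p • e0 n) := by
    have := mul_conj_self p
    rw [pure_conj hpure, mul_neg'] at this
    linear_combination (norm := abel) -this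
  have hexp : a * a = (t * t - CD.inner p p) • e0 n + (2 * t) • p := by
    rw [ha, add_mul', mul_add', mul_add', smul_mul', smul_mul', mul_smul', mul_smul',
      hp2, smul_smul, one_mul' (e0 n), one_mul' p, mul_e0 p, sub_smul,
      show (2 : ℝ) * t = t + t by ring, add_smul]
    abel
  rw [h] at hexp
  -- inner with e0 gives t² - ⟨p,p⟩ = -1
  have hco : t * t - CD.inner p p = -1 := by
    have := congrArg (fun z => CD.inner z (e0 n)) hexp
    simp only [inner_add_left, inner_smul_left, inner_e0_e0, inner_neg_left, hpp] at this
    linarith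
  have hzp : (2 * t) • p = 0 := by
    have : -(e0 n) = (-1 : ℝ) • e0 n + (2*t) • p := by rw [← hco]; exact hexp
    have h2 : ((-1 : ℝ) • e0 n : CD n) = -(e0 n) := by simp
    rw [h2] at this
    linear_combination (norm := abel) -this
  rcases smul_eq_zero.mp hzp with h0 | h0
  · have ht0 : t = 0 := by linarith [h0]
    have hap : a = p := by rw [ha, ht0]; simp
    constructor
    · rw [hap]; exact hpure
    · rw [hap]; nlinarith [hco]
  · exfalso
    rw [h0] at ha
    have : a = t • e0 n := by rw [ha]; simp
    rw [this] at h
    rw [smul_mul', mul_smul', mul_e0, smul_smul] at h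
    have : (t * t) • e0 n + e0 n = 0 := by
      rw [h]; abel
    have h3 : ((t * t + 1 : ℝ)) • e0 n = 0 := by
      rw [add_smul, one_smul]; exact this
    have := smul_e0_eq_zero h3
    nlinarith

lemma norm_eq_one_iff {n : ℕ} {x : CD n} : CD.norm x = 1 ↔ CD.inner x x = 1 := by
  unfold CD.norm
  exact Real.sqrt_eq_one

end CD
namespace CD

structure QTable {n : ℕ} (a b c : CD n) : Prop where
  aa : a * a = -(e0 n)
  bb : b * b = -(e0 n)
  cc : c * c = -(e0 n)
  ab : a * b = c
  ba : b * a = -c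
  ac : a * c = -b
  ca : c * a = b
  bc : b * c = a
  cb : c * b = -a

theorem qtable {n : ℕ} {a b : CD n} (ha : IsPure a) (hb : IsPure b)
    (na : CD.inner a a = 1) (nb : CD.inner b b = 1) (hab : CD.inner a b = 0)
    (h1 : assoc a a b = 0) (h2 : assoc a b b = 0) :
    QTable a b (a * b) ∧ IsPure (a * b) ∧ CD.inner (a * b) (a * b) = 1 ∧
      CD.inner a (a * b) = 0 ∧ CD.inner b (a * b) = 0 := by
  set c := a * b with hc
  have haa : a * a = -(e0 n) := sq_eq_neg_e0 ha na
  have hbb : b * b = -(e0 n) := sq_eq_neg_e0 hb nb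
  have hba : b * a = -c := anticomm' ha hb hab
  have hcpure : IsPure c := by
    show c + CD.conj c = 0
    rw [hc, conj_mul, pure_conj ha, pure_conj hb, neg_mul', mul_neg', neg_neg, hba]
    abel
  -- a(ab) = (aa)b = -b
  have hac : a * c = -b := by
    have : (a * a) * b - a * (a * b) = 0 := h1
    have h3 : a * (a * b) = (a * a) * b := by linear_combination (norm := abel) -this
    rw [hc, h3, haa, neg_mul', one_mul']
  -- (ab)b = a(bb) = -a
  have hcb : c * b = -a := by
    have : (a * b) * b - a * (b * b) = 0 := h2
    have h3 : (a * b) * b = a * (b * b) := by linear_combination (norm := abel) this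
    rw [hc, h3, hbb, mul_neg', mul_e0]
  have hica : CD.inner c a = 0 := by
    rw [hc, inner_mul_left', conj_mul_self, na, one_smul, inner_comm b, inner_comm]
    exact pure_iff.mp hb
  have hiac : CD.inner a c = 0 := by rw [inner_comm]; exact hica
  have hicb : CD.inner c b = 0 := by
    rw [hc, inner_mul_right', mul_conj_self, nb, one_smul]
    exact pure_iff.mp ha
  have hibc : CD.inner b c = 0 := by rw [inner_comm]; exact hicb
  have hicc : CD.inner c c = 1 := by
    calc CD.inner c c = CD.inner b (CD.conj a * c) := by rw [hc, inner_mul_left']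
    _ = CD.inner b (-(a * c)) := by rw [pure_conj ha, neg_mul']
    _ = CD.inner b b := by rw [hac, neg_neg]
    _ = 1 := nb
  have hcc : c * c = -(e0 n) := sq_eq_neg_e0 hcpure hicc
  have hca : c * a = b := by
    have := anticomm' ha hcpure hiac
    rw [hac] at this
    rw [this, neg_neg]
  have hbc : b * c = a := by
    have := anticomm' hcpure hb hicb
    rw [hcb] at this
    rw [this, neg_neg]
  exact ⟨⟨haa, hbb, hcc, hc.symm, hba, hac, hca, hbc, hcb⟩, hcpure, hicc, hiac, hibc⟩

end CD
namespace CD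
lemma add0 (x y : CD 0) : x + y = (show ℝ from x) + (show ℝ from y) := rfl
lemma sub0 (x y : CD 0) : x - y = (show ℝ from x) - (show ℝ from y) := rfl
lemma neg0 (x : CD 0) : -x = -(show ℝ from x) := rfl
lemma zero0 : (0 : CD 0) = (0 : ℝ) := rfl
lemma smul0 (r : ℝ) (x : CD 0) : r • x = r * (show ℝ from x) := rfl
lemma r0 :
    (∀ (x : CD 0) (y : CD 0), @HMul.hMul (CD 0) (CD 0) (CD 0) _ x y = @HMul.hMul ℝ ℝ ℝ _ x y) ∧
    (∀ (x : CD 0) (y : ℝ), @HMul.hMul (CD 0) (CD 0) (CD 0) _ x y = @HMul.hMul ℝ ℝ ℝ _ x y) ∧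
    (∀ (x : ℝ) (y : CD 0), @HMul.hMul (CD 0) (CD 0) (CD 0) _ x y = @HMul.hMul ℝ ℝ ℝ _ x y) ∧
    (∀ (x : ℝ) (y : ℝ), @HMul.hMul (CD 0) (CD 0) (CD 0) _ x y = @HMul.hMul ℝ ℝ ℝ _ x y) ∧
    (∀ (x : CD 0) (y : CD 0), @HAdd.hAdd (CD 0) (CD 0) (CD 0) _ x y = @HAdd.hAdd ℝ ℝ ℝ _ x y) ∧
    (∀ (x : CD 0) (y : ℝ), @HAdd.hAdd (CD 0) (CD 0) (CD 0) _ x y = @HAdd.hAdd ℝ ℝ ℝ _ x y) ∧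
    (∀ (x : ℝ) (y : CD 0), @HAdd.hAdd (CD 0) (CD 0) (CD 0) _ x y = @HAdd.hAdd ℝ ℝ ℝ _ x y) ∧
    (∀ (x : ℝ) (y : ℝ), @HAdd.hAdd (CD 0) (CD 0) (CD 0) _ x y = @HAdd.hAdd ℝ ℝ ℝ _ x y) ∧
    (∀ (x : CD 0) (y : CD 0), @HSub.hSub (CD 0) (CD 0) (CD 0) _ x y = @HSub.hSub ℝ ℝ ℝ _ x y) ∧
    (∀ (x : CD 0) (y : ℝ), @HSub.hSub (CD 0) (CD 0) (CD 0) _ x y = @HSub.hSub ℝ ℝ ℝ _ x y) ∧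
    (∀ (x : ℝ) (y : CD 0), @HSub.hSub (CD 0) (CD 0) (CD 0) _ x y = @HSub.hSub ℝ ℝ ℝ _ x y) ∧
    (∀ (x : ℝ) (y : ℝ), @HSub.hSub (CD 0) (CD 0) (CD 0) _ x y = @HSub.hSub ℝ ℝ ℝ _ x y) ∧
    (∀ x : CD 0, @Neg.neg (CD 0) _ x = @Neg.neg ℝ _ x) ∧
    (∀ x : CD 0, @CD.conj 0 x = x) ∧
    (∀ x : ℝ, @Neg.neg (CD 0) _ x = @Neg.neg ℝ _ x) ∧
    (∀ x : ℝ, @CD.conj 0 x = x) ∧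
    (∀ (x : CD 0) (y : CD 0), @Eq (CD 0) x y ↔ @Eq ℝ x y) ∧
    (∀ (x : CD 0) (y : ℝ), @Eq (CD 0) x y ↔ @Eq ℝ x y) ∧
    (∀ (x : ℝ) (y : CD 0), @Eq (CD 0) x y ↔ @Eq ℝ x y) ∧
    (∀ (x : ℝ) (y : ℝ), @Eq (CD 0) x y ↔ @Eq ℝ x y) ∧
    ((0 : CD 0) = (0 : ℝ)) ∧
    (e0 0 = (1 : ℝ)) ∧
    (∀ p : CD 1, @Prod.fst (CD 0) (CD 0) p = @Prod.fst ℝ ℝ p) ∧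
    (∀ p : CD 1, @Prod.snd (CD 0) (CD 0) p = @Prod.snd ℝ ℝ p) := by
  and_intros <;> intros <;> rfl
lemma projs {n : ℕ} :
    (∀ x y : CD (n+1), (x * y).1 = x.1 * y.1 - CD.conj y.2 * x.2) ∧
    (∀ x y : CD (n+1), (x * y).2 = y.2 * x.1 + x.2 * CD.conj y.1) ∧
    (∀ x y : CD (n+1), (x + y).1 = x.1 + y.1) ∧
    (∀ x y : CD (n+1), (x + y).2 = x.2 + y.2) ∧
    (∀ x y : CD (n+1), (x - y).1 = x.1 - y.1) ∧
    (∀ x y : CD (n+1), (x - y).2 = x.2 - y.2) ∧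
    (∀ x : CD (n+1), (-x).1 = -x.1) ∧
    (∀ x : CD (n+1), (-x).2 = -x.2) ∧
    (∀ x : CD (n+1), (CD.conj x).1 = CD.conj x.1) ∧
    (∀ x : CD (n+1), (CD.conj x).2 = -x.2) ∧
    ((0 : CD (n+1)).1 = 0) ∧
    ((0 : CD (n+1)).2 = 0) ∧
    ((e0 (n+1)).1 = e0 n) ∧
    ((e0 (n+1)).2 = 0) ∧
    ((te0 (n+1)).1 = 0) ∧
    ((te0 (n+1)).2 = e0 n) := by
  and_intros <;> intros <;> rfl
end CD

open CD in
example : q1 * q2 = q3 := by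
  refine ext_succ (ext_succ ?_ ?_) (ext_succ ?_ ?_) <;>
  · simp only [projs]
    simp only [q1, q2, q3, projs, r0]
    norm_num

open CD in
example (x y z : CD 2) : (x * y) * z = x * (y * z) := by
  refine ext_succ (ext_succ ?_ ?_) (ext_succ ?_ ?_) <;>
  · simp only [projs, r0]
    ring
namespace CD

/-- Real coordinates of a quaternion. -/
def r1 (x : CD 2) : ℝ := x.1.1
def r2 (x : CD 2) : ℝ := x.1.2
def r3 (x : CD 2) : ℝ := x.2.1
def r4 (x : CD 2) : ℝ := x.2.2

/-- Quaternion from four real coordinates. -/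
def mk2 (p q r s : ℝ) : CD 2 := ((p, q), (r, s))

lemma mk2_coords (x : CD 2) : mk2 (r1 x) (r2 x) (r3 x) (r4 x) = x := rfl
lemma mk2_zero : mk2 0 0 0 0 = 0 := rfl
lemma mk2_e0 : mk2 1 0 0 0 = e0 2 := rfl
lemma mk2_q1 : mk2 0 1 0 0 = q1 := rfl
lemma mk2_q2 : mk2 0 0 1 0 = q2 := rfl
lemma mk2_q3 : mk2 0 0 0 1 = q3 := rfl

/-- The linear map `ℍ → A n` determined by a quaternion triple `(a,b,c)`. -/
def hom {n : ℕ} (a b c : CD n) : CD 2 →ₗ[ℝ] CD n where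
  toFun x := r1 x • e0 n + r2 x • a + r3 x • b + r4 x • c
  map_add' x y := by
    have h1 : r1 (x + y) = r1 x + r1 y := rfl
    have h2 : r2 (x + y) = r2 x + r2 y := rfl
    have h3 : r3 (x + y) = r3 x + r3 y := rfl
    have h4 : r4 (x + y) = r4 x + r4 y := rfl
    rw [h1, h2, h3, h4, add_smul, add_smul, add_smul, add_smul]
    abel
  map_smul' r x := by
    have h1 : r1 (r • x) = r * r1 x := rfl
    have h2 : r2 (r • x) = r * r2 x := rfl
    have h3 : r3 (r • x) = r * r3 x := rfl
    have h4 : r4 (r • x) = r * r4 x := rfl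
    rw [h1, h2, h3, h4, mul_smul, mul_smul, mul_smul, mul_smul]
    simp only [RingHom.id_apply, smul_add]

lemma hom_apply {n : ℕ} (a b c : CD n) (x : CD 2) :
    hom a b c x = r1 x • e0 n + r2 x • a + r3 x • b + r4 x • c := rfl

lemma hom_mk {n : ℕ} (a b c : CD n) (p q r s : ℝ) :
    hom a b c (mk2 p q r s) = p • e0 n + q • a + r • b + s • c := rfl

lemma hom_q1 {n : ℕ} (a b c : CD n) : hom a b c q1 = a := by
  rw [← mk2_q1, hom_mk]; simp

lemma hom_q2 {n : ℕ} (a b c : CD n) : hom a b c q2 = b := by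
  rw [← mk2_q2, hom_mk]; simp

lemma hom_q3 {n : ℕ} (a b c : CD n) : hom a b c q3 = c := by
  rw [← mk2_q3, hom_mk]; simp

lemma hom_e0 {n : ℕ} (a b c : CD n) : hom a b c (e0 2) = e0 n := by
  rw [← mk2_e0, hom_mk]; simp

lemma mul_mk2 (x1 x2 x3 x4 y1 y2 y3 y4 : ℝ) :
    mk2 x1 x2 x3 x4 * mk2 y1 y2 y3 y4
      = mk2 (x1*y1 - x2*y2 - x3*y3 - x4*y4) (x1*y2 + x2*y1 + x3*y4 - x4*y3)
          (x1*y3 - x2*y4 + x3*y1 + x4*y2) (x1*y4 + x2*y3 - x3*y2 + x4*y1) := by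
  refine ext_succ (ext_succ ?_ ?_) (ext_succ ?_ ?_) <;>
  · simp only [projs]
    simp only [mk2, projs, r0]
    ring

lemma hom_mul {n : ℕ} {a b c : CD n} (T : QTable a b c) (x y : CD 2) :
    hom a b c (x * y) = hom a b c x * hom a b c y := by
  rw [← mk2_coords x, ← mk2_coords y, mul_mk2, hom_mk, hom_mk, hom_mk]
  simp only [add_mul', mul_add', smul_mul', mul_smul', T.aa, T.bb, T.cc, T.ab, T.ba,
    T.ac, T.ca, T.bc, T.cb, one_mul', mul_e0]
  module

lemma hom_inj {n : ℕ} {a b c : CD n} (ha : IsPure a) (hb : IsPure b) (hc : IsPure c)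
    (na : CD.inner a a = 1) (nb : CD.inner b b = 1) (nc : CD.inner c c = 1)
    (hab : CD.inner a b = 0) (hac : CD.inner a c = 0) (hbc : CD.inner b c = 0) :
    Function.Injective (hom a b c) := by
  have key : ∀ x : CD 2, hom a b c x = 0 → x = 0 := by
    intro x hx
    rw [hom_apply] at hx
    have ip : ∀ z : CD n,
        CD.inner (r1 x • e0 n + r2 x • a + r3 x • b + r4 x • c) z = 0 := by
      intro z; rw [hx]; exact inner_zero_left z
    have h0a : CD.inner a (e0 n) = 0 := pure_iff.mp ha
    have h0b : CD.inner b (e0 n) = 0 := pure_iff.mp hb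
    have h0c : CD.inner c (e0 n) = 0 := pure_iff.mp hc
    have e1 := ip (e0 n)
    have e2 := ip a
    have e3 := ip b
    have e4 := ip c
    simp only [inner_add_left, inner_smul_left, inner_e0_e0,
      inner_comm (e0 n) a, inner_comm (e0 n) b, inner_comm (e0 n) c,
      inner_comm b a, inner_comm c a, inner_comm c b,
      h0a, h0b, h0c, na, nb, nc, hab, hac, hbc]
      at e1 e2 e3 e4
    have hp : r1 x = 0 := by linarith
    have hq : r2 x = 0 := by linarith
    have hr : r3 x = 0 := by linarith
    have hs : r4 x = 0 := by linarith
    rw [← mk2_coords x, hp, hq, hr, hs, mk2_zero]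
  intro u v huv
  have h0 : hom a b c (u - v) = 0 := by rw [map_sub, huv, sub_self]
  have := key _ h0
  linear_combination (norm := abel) this

end CD
namespace CD

lemma neg_mk2 (p q r s : ℝ) : -(mk2 p q r s) = mk2 (-p) (-q) (-r) (-s) := rfl
lemma neg_e0_2 : -(e0 2) = mk2 (-1) 0 0 0 := by
  rw [← mk2_e0, neg_mk2]; norm_num
lemma neg_q3 : -q3 = mk2 0 0 0 (-1) := by
  rw [← mk2_q3, neg_mk2]; norm_num

lemma q1_mul_q1 : q1 * q1 = -(e0 2) := by
  rw [← mk2_q1, mul_mk2, neg_e0_2]; norm_num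

lemma q2_mul_q2 : q2 * q2 = -(e0 2) := by
  rw [← mk2_q2, mul_mk2, neg_e0_2]; norm_num

lemma q1_mul_q2 : q1 * q2 = q3 := by
  rw [← mk2_q1, ← mk2_q2, mul_mk2, ← mk2_q3]; norm_num

lemma q2_mul_q1 : q2 * q1 = -q3 := by
  rw [← mk2_q1, ← mk2_q2, mul_mk2, neg_q3]; norm_num

lemma smul_mk2 (t p q r s : ℝ) : t • mk2 p q r s = mk2 (t*p) (t*q) (t*r) (t*s) := rfl
lemma add_mk2 (p q r s p' q' r' s' : ℝ) :
    mk2 p q r s + mk2 p' q' r' s' = mk2 (p+p') (q+q') (r+r') (s+s') := rfl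

lemma coords2 (x : CD 2) : x = r1 x • e0 2 + r2 x • q1 + r3 x • q2 + r4 x • q3 := by
  conv_rhs => rw [← mk2_e0, ← mk2_q1, ← mk2_q2, ← mk2_q3]
  rw [smul_mk2, smul_mk2, smul_mk2, smul_mk2, add_mk2, add_mk2, add_mk2]
  norm_num
  exact (mk2_coords x).symm

lemma mul_assoc2 (x y z : CD 2) : (x * y) * z = x * (y * z) := by
  refine ext_succ (ext_succ ?_ ?_) (ext_succ ?_ ?_) <;>
  · simp only [projs, r0]
    ring

lemma alt2 : ∀ x y : CD 2, CD.assoc x x y = 0 ∧ CD.assoc x y y = 0 := by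
  intro x y
  constructor <;>
  · show _ - _ = 0
    rw [mul_assoc2, sub_self]

lemma alt3 : ∀ x y : CD 3, CD.assoc x x y = 0 ∧ CD.assoc x y y = 0 := by
  intro x y
  constructor <;>
  · refine ext_succ (ext_succ (ext_succ ?_ ?_) (ext_succ ?_ ?_)) (ext_succ (ext_succ ?_ ?_) (ext_succ ?_ ?_)) <;>
    · simp only [CD.assoc, projs, r0]
      ring

end CD

open CD in
lemma keyBij (n : ℕ) :
    Set.BijOn (fun φ : CD 2 →ₗ[ℝ] CD n => (φ q1, φ q2))
      {φ | IsMono φ}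
      {p ∈ V n | CD.assoc p.1 p.1 p.2 = 0 ∧ CD.assoc p.1 p.2 p.2 = 0} := by
  constructor
  · -- MapsTo
    rintro φ ⟨hinj, he0, hmul⟩
    set a := φ q1 with hA
    set b := φ q2 with hB
    have haa : a * a = -(e0 n) := by
      rw [hA, ← hmul, q1_mul_q1, map_neg, he0]
    have hbb : b * b = -(e0 n) := by
      rw [hB, ← hmul, q2_mul_q2, map_neg, he0]
    obtain ⟨hpa, hna⟩ := of_sq_eq_neg_e0 haa
    obtain ⟨hpb, hnb⟩ := of_sq_eq_neg_e0 hbb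
    have hsum : a * b + b * a = 0 := by
      rw [hA, hB, ← hmul, ← hmul, ← map_add]
      rw [show q1 * q2 + q2 * q1 = 0 by rw [q1_mul_q2, q2_mul_q1]; abel]
      exact map_zero φ
    have hab : CD.inner a b = 0 := by
      have h := anticomm hpa hpb
      rw [hsum] at h
      have h2 : (2 * CD.inner a b) • e0 n = 0 := by
        rw [← neg_neg ((2 * CD.inner a b) • e0 n), ← h, neg_zero]
      have := smul_e0_eq_zero h2
      linarith
    have hassoc : ∀ u v w : CD 2, CD.assoc (φ u) (φ v) (φ w) = 0 := by
      intro u v w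
      show (φ u * φ v) * φ w - φ u * (φ v * φ w) = 0
      rw [← hmul, ← hmul, ← hmul, ← hmul, ← map_sub]
      rw [show (u * v) * w - u * (v * w) = 0 by rw [mul_assoc2, sub_self]]
      exact map_zero φ
    exact ⟨⟨hpa, hpb, norm_eq_one_iff.mpr hna, norm_eq_one_iff.mpr hnb, hab⟩,
      hassoc q1 q1 q2, hassoc q1 q2 q2⟩
  constructor
  · -- InjOn
    rintro φ ⟨_, he0φ, hmulφ⟩ ψ ⟨_, he0ψ, hmulψ⟩ h
    have h1 : φ q1 = ψ q1 := congrArg Prod.fst h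
    have h2 : φ q2 = ψ q2 := congrArg Prod.snd h
    have h3 : φ q3 = ψ q3 := by
      rw [← q1_mul_q2, hmulφ, hmulψ, h1, h2]
    have h0 : φ (e0 2) = ψ (e0 2) := by rw [he0φ, he0ψ]
    ext x
    have hd := coords2 x
    calc φ x = φ (r1 x • e0 2 + r2 x • q1 + r3 x • q2 + r4 x • q3) := by rw [← hd]
    _ = r1 x • φ (e0 2) + r2 x • φ q1 + r3 x • φ q2 + r4 x • φ q3 := by
        simp only [map_add, map_smul]
    _ = r1 x • ψ (e0 2) + r2 x • ψ q1 + r3 x • ψ q2 + r4 x • ψ q3 := by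
        rw [h0, h1, h2, h3]
    _ = ψ (r1 x • e0 2 + r2 x • q1 + r3 x • q2 + r4 x • q3) := by
        simp only [map_add, map_smul]
    _ = ψ x := by rw [← hd]
  · -- SurjOn
    rintro ⟨a, b⟩ ⟨⟨hpa, hpb, hna1, hnb1, hab⟩, h1, h2⟩
    have na : CD.inner a a = 1 := norm_eq_one_iff.mp hna1
    have nb : CD.inner b b = 1 := norm_eq_one_iff.mp hnb1
    obtain ⟨T, hcpure, hicc, hiac, hibc⟩ := qtable hpa hpb na nb hab h1 h2
    refine ⟨hom a b (a * b), ?_, ?_⟩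
    · exact ⟨hom_inj hpa hpb hcpure na nb hicc hab hiac hibc, hom_e0 a b (a*b),
        fun x y => hom_mul T x y⟩
    · show (hom a b (a*b) q1, hom a b (a*b) q2) = (a, b)
      rw [hom_q1, hom_q2]

/-- For `n ≥ 2`, `φ ↦ (φ(e₁), φ(e₂))` is a bijection from
`𝓜(A 2; A n)` onto `{(a,b) ∈ V_{2^n-1,2} : (a,a,b) = 0 ∧ (a,b,b) = 0}`.
In `A 2` and `A 3` every pair alternates strongly, so `Aut(A 2) = 𝓜(A 2; A 2)`
corresponds to `V_{3,2}` and `𝓜(A 2; A 3)` to `V_{7,2}`. -/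
theorem statement18 (n : ℕ) (hn : 2 ≤ n) :
    Set.BijOn (fun φ : CD 2 →ₗ[ℝ] CD n => (φ q1, φ q2))
      {φ | IsMono φ}
      {p ∈ V n | CD.assoc p.1 p.1 p.2 = 0 ∧ CD.assoc p.1 p.2 p.2 = 0} ∧
    (∀ x y : CD 2, CD.assoc x x y = 0 ∧ CD.assoc x y y = 0) ∧
    (∀ x y : CD 3, CD.assoc x x y = 0 ∧ CD.assoc x y y = 0) ∧
    Set.BijOn (fun φ : CD 2 →ₗ[ℝ] CD 2 => (φ q1, φ q2)) {φ | IsMono φ} (V 2) ∧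
    Set.BijOn (fun φ : CD 2 →ₗ[ℝ] CD 3 => (φ q1, φ q2)) {φ | IsMono φ} (V 3) := by
  have e2 : {p ∈ V 2 | CD.assoc p.1 p.1 p.2 = 0 ∧ CD.assoc p.1 p.2 p.2 = 0} = V 2 :=
    Set.ext fun p => ⟨fun h => h.1, fun h => ⟨h, (CD.alt2 p.1 p.2).1, (CD.alt2 p.1 p.2).2⟩⟩
  have e3 : {p ∈ V 3 | CD.assoc p.1 p.1 p.2 = 0 ∧ CD.assoc p.1 p.2 p.2 = 0} = V 3 :=
    Set.ext fun p => ⟨fun h => h.1, fun h => ⟨h, (CD.alt3 p.1 p.2).1, (CD.alt3 p.1 p.2).2⟩⟩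
  exact ⟨keyBij n, CD.alt2, CD.alt3, e2 ▸ keyBij 2, e3 ▸ keyBij 3⟩
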